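/- arXiv:1808.02769 — 2 statements merged into one kernel-verified Lean document; each statement's English description precedes it below -/
import Mathlib

section
/- Let $\alpha_1, \ldots, \alpha_k \in (\mathbb{Z}_{\geq 0})^n$ be multi-indices with $|\alpha_i| > 0$ for each $i$. Then $\alpha_1! \alpha_2! \cdots \alpha_k! \leq \frac{(\alpha_1 + \alpha_2 + \cdots + \alpha_k)!}{k!} \, n^k$. -/
open Finset Nat in
private lemma aux1 {ι : Type*} (s : Finset ι) (f : ι → ℕ) (h : ∀ i ∈ s, 1 ≤ f i) :
    s.card.factorial * ∏ i ∈ s, (f i).factorial ≤ (∑ i ∈ s, f i).factorial := by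
  classical
  induction s using Finset.cons_induction with
  | empty => simp
  | cons a s ha ih =>
    rw [Finset.sum_cons, Finset.prod_cons, Finset.card_cons]
    have hS : s.card ≤ ∑ i ∈ s, f i := by
      calc s.card = ∑ _i ∈ s, 1 := by simp
        _ ≤ ∑ i ∈ s, f i := Finset.sum_le_sum fun i hi => h i (Finset.mem_cons_of_mem hi)
    have hfa : 1 ≤ f a := h a (Finset.mem_cons_self a s)
    have key : (f a + ∑ i ∈ s, f i).factorial
        = (f a + ∑ i ∈ s, f i).choose (∑ i ∈ s, f i) * (f a).factorial * (∑ i ∈ s, f i).factorial :=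
      (Nat.add_choose_mul_factorial_mul_factorial _ _).symm
    have hchoose : s.card + 1 ≤ (f a + ∑ i ∈ s, f i).choose (∑ i ∈ s, f i) := by
      have h2 : ((∑ i ∈ s, f i) + 1).choose (∑ i ∈ s, f i) ≤
          (f a + ∑ i ∈ s, f i).choose (∑ i ∈ s, f i) :=
        Nat.choose_le_choose _ (by omega)
      rw [Nat.choose_succ_self_right] at h2
      omega
    calc (s.card + 1).factorial * ((f a).factorial * ∏ i ∈ s, (f i).factorial)
        = (s.card + 1) * (s.card.factorial * ∏ i ∈ s, (f i).factorial) * (f a).factorial := by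
          rw [Nat.factorial_succ]; ring
      _ ≤ (f a + ∑ i ∈ s, f i).choose (∑ i ∈ s, f i) * (∑ i ∈ s, f i).factorial * (f a).factorial := by
          have := ih fun i hi => h i (Finset.mem_cons_of_mem hi)
          exact Nat.mul_le_mul (Nat.mul_le_mul hchoose this) le_rfl
      _ = (f a + ∑ i ∈ s, f i).factorial := by rw [key]; ring

private lemma aux2 {ι : Type*} [Fintype ι] [DecidableEq ι] (f : ι → ℕ) (S : Finset ι)
    (h : ∀ i ∈ S, 1 ≤ f i) :
    S.card.factorial * ∏ i, (f i).factorial ≤ (∑ i, f i).factorial := by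
  rw [← Finset.sum_add_sum_compl S, ← Finset.prod_mul_prod_compl S]
  calc S.card.factorial * ((∏ i ∈ S, (f i).factorial) * ∏ i ∈ Sᶜ, (f i).factorial)
      = (S.card.factorial * ∏ i ∈ S, (f i).factorial) * ∏ i ∈ Sᶜ, (f i).factorial := by ring
    _ ≤ (∑ i ∈ S, f i).factorial * (∑ i ∈ Sᶜ, f i).factorial :=
        Nat.mul_le_mul (aux1 S f h)
          (Nat.le_of_dvd (Nat.factorial_pos _) (Nat.prod_factorial_dvd_factorial_sum _ _))
    _ ≤ ((∑ i ∈ S, f i) + ∑ i ∈ Sᶜ, f i).factorial :=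
        Nat.le_of_dvd (Nat.factorial_pos _) (Nat.factorial_mul_factorial_dvd_factorial_add _ _)

private lemma aux3 (n k : ℕ) (m : Fin n → ℕ) (hm : ∑ j, m j = k) :
    k.factorial ≤ (∏ j, (m j).factorial) * n ^ k := by
  have hmem : m ∈ Finset.piAntidiag (Finset.univ : Finset (Fin n)) k :=
    Finset.mem_piAntidiag.2 ⟨hm, fun i _ => Finset.mem_univ i⟩
  have hpow := Finset.sum_pow_eq_sum_piAntidiag (Finset.univ : Finset (Fin n))
    (fun _ => (1 : ℕ)) k
  simp only [Finset.sum_const, Finset.card_univ, Fintype.card_fin, smul_eq_mul, mul_one,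
    one_pow, Finset.prod_const_one] at hpow
  have hle : Nat.multinomial Finset.univ m ≤ n ^ k := by
    rw [hpow]
    exact Finset.single_le_sum (fun w _ => Nat.zero_le _) hmem
  have hspec := Nat.multinomial_spec (Finset.univ : Finset (Fin n)) m
  rw [hm] at hspec
  calc k.factorial = (∏ j, (m j).factorial) * Nat.multinomial Finset.univ m := hspec.symm
    _ ≤ (∏ j, (m j).factorial) * n ^ k := Nat.mul_le_mul_left _ hle

/-- For multi-indices `α₁,…,α_k ∈ (ℤ≥0)^n` with `|αᵢ| > 0` for each `i`,
`α₁! α₂! ⋯ α_k! ≤ (α₁+⋯+α_k)! / k! · n^k`, stated multiplicatively as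
`k! · ∏ᵢ αᵢ! ≤ (∑ᵢ αᵢ)! · n^k`. -/
theorem multiindex_prod_factorial_le (n k : ℕ) (α : Fin k → (Fin n → ℕ))
    (hα : ∀ i, 0 < ∑ j, α i j) :
    k.factorial * ∏ i, ∏ j, (α i j).factorial
      ≤ (∏ j, (∑ i, α i j).factorial) * n ^ k := by
  classical
  have hg : ∀ i, ∃ j, 1 ≤ α i j := by
    intro i
    obtain ⟨j, _, hj⟩ := Finset.exists_ne_zero_of_sum_ne_zero (hα i).ne'
    exact ⟨j, Nat.one_le_iff_ne_zero.2 hj⟩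
  choose g hgg using hg
  set m : Fin n → ℕ := fun j => (Finset.univ.filter (fun i => g i = j)).card with hm
  have hsum : ∑ j, m j = k := by
    simp only [hm]
    have h := Finset.card_eq_sum_card_fiberwise
      (f := g) (s := (Finset.univ : Finset (Fin k))) (t := (Finset.univ : Finset (Fin n)))
      (fun i _ => Finset.mem_univ (g i))
    simp only [Finset.card_univ, Fintype.card_fin] at h
    exact h.symm
  have hcol : ∀ j, (m j).factorial * ∏ i, (α i j).factorial ≤ (∑ i, α i j).factorial := by
    intro j
    exact aux2 (fun i => α i j) (Finset.univ.filter (fun i => g i = j))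
      (fun i hi => by
        have : g i = j := (Finset.mem_filter.1 hi).2
        rw [← this]; exact hgg i)
  calc k.factorial * ∏ i, ∏ j, (α i j).factorial
      ≤ ((∏ j, (m j).factorial) * n ^ k) * ∏ i, ∏ j, (α i j).factorial :=
        Nat.mul_le_mul_right _ (aux3 n k m hsum)
    _ = (∏ j, (m j).factorial * ∏ i, (α i j).factorial) * n ^ k := by
        rw [Finset.prod_mul_distrib, Finset.prod_comm]; ring
    _ ≤ (∏ j, (∑ i, α i j).factorial) * n ^ k :=
        Nat.mul_le_mul_right _ (Finset.prod_le_prod (fun j _ => Nat.zero_le _)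
          (fun j _ => hcol j))
end

section
/- Let $s > 2$ and $C \geq 1$. There exist constants $C', C'' > 0$ (depending only on $s$ and $C$) such that for all real $k \geq 1$ and all integers $N \geq 1$: $\sum_{m=1}^{N} \frac{C^m (m!)^{s}}{k^m} \leq C' \left( k + \frac{(C'')^N (N!)^{s}}{k^N} \right)$. -/
open Real Finset

private lemma fac_le_pow_aux (m : ℕ) (hm : 1 ≤ m) : m.factorial ≤ (m+1)^(m-1) := by
  induction m with
  | zero => simp
  | succ n ih =>
    rcases Nat.eq_zero_or_pos n with h | h
    · subst h; simp [Nat.factorial]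
    · calc (n+1).factorial = (n+1) * n.factorial := rfl
        _ ≤ (n+1) * (n+1)^(n-1) := Nat.mul_le_mul_left _ (ih h)
        _ = (n+1)^n := by rw [← pow_succ']; congr 1; omega
        _ ≤ (n+2)^n := Nat.pow_le_pow_left (by omega) n
        _ = (n+1+1)^(n+1-1) := by congr 1

private lemma nat_key (m N : ℕ) (hm : 1 ≤ m) (hmN : m ≤ N) :
    m.factorial ^ (N-1) ≤ N.factorial ^ (m-1) := by
  calc m.factorial ^ (N-1) = m.factorial ^ (N-m) * m.factorial ^ (m-1) := by
        rw [← pow_add]; congr 1; omega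
    _ ≤ ((m+1)^(m-1))^(N-m) * m.factorial ^ (m-1) :=
        Nat.mul_le_mul_right _ (Nat.pow_le_pow_left (fac_le_pow_aux m hm) _)
    _ = ((m+1)^(N-m) * m.factorial)^(m-1) := by
        rw [mul_pow, ← pow_mul, ← pow_mul, Nat.mul_comm (m-1)]
    _ ≤ N.factorial ^ (m-1) := by
        apply Nat.pow_le_pow_left
        have h := @Nat.factorial_mul_pow_le_factorial m (N-m)
        rw [Nat.add_sub_cancel' hmN] at h
        rw [Nat.mul_comm]
        exact h

private lemma rpow_pow_comm (x : ℝ) (hx : 0 ≤ x) (s : ℝ) (n : ℕ) :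
    (x ^ s) ^ n = (x ^ n) ^ s := by
  rw [← Real.rpow_natCast (x^s) n, ← Real.rpow_natCast x n, ← Real.rpow_mul hx,
    ← Real.rpow_mul hx, mul_comm]

private lemma geom_half_eq (N : ℕ) : ∑ m ∈ Finset.Icc 1 N, ((1:ℝ)/2)^m = 1 - ((1:ℝ)/2)^N := by
  induction N with
  | zero => simp
  | succ n ih =>
    rw [Finset.sum_Icc_succ_top (by omega), ih, pow_succ]
    ring

private lemma geom_half_sum (N : ℕ) : ∑ m ∈ Finset.Icc 1 N, ((1:ℝ)/2)^m ≤ 1 := by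
  rw [geom_half_eq]
  have : (0:ℝ) ≤ ((1:ℝ)/2)^N := by positivity
  linarith

/-- For `s > 2` and `C ≥ 1` there exist constants `C', C'' > 0` such that for all
`k ≥ 1` and all integers `N ≥ 1`:
`∑_{m=1}^N C^m (m!)^s / k^m ≤ C' (k + (C'')^N (N!)^s / k^N)`. -/
theorem sum_factorial_pow_le (s C : ℝ) (hs : 2 < s) (hC : 1 ≤ C) :
    ∃ C' > (0 : ℝ), ∃ C'' > (0 : ℝ), ∀ k : ℝ, 1 ≤ k → ∀ N : ℕ, 1 ≤ N →
      ∑ m ∈ Finset.Icc 1 N, C ^ m * (m.factorial : ℝ) ^ s / k ^ m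
        ≤ C' * (k + C'' ^ N * (N.factorial : ℝ) ^ s / k ^ N) := by
  have h2s : (2:ℝ) ≤ 2 ^ s := by
    calc (2:ℝ) = 2 ^ (1:ℝ) := (Real.rpow_one 2).symm
      _ ≤ 2 ^ s := Real.rpow_le_rpow_of_exponent_le one_le_two (by linarith)
  set B : ℝ := 2 ^ s * C with hB
  have hB1 : (1:ℝ) ≤ B := by nlinarith
  have hCB : C ≤ B := by nlinarith
  have hB0 : (0:ℝ) < B := by linarith
  have hC0 : (0:ℝ) < C := by linarith
  refine ⟨2*C, by linarith, 2*B, by linarith, ?_⟩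
  intro k hk N hN
  have hk0 : (0:ℝ) < k := by linarith
  have hfN : (0:ℝ) < ((N.factorial : ℕ):ℝ) := by positivity
  have hfNs : (0:ℝ) < (N.factorial : ℝ) ^ s := Real.rpow_pos_of_pos hfN s
  set T : ℝ := B ^ N * (N.factorial : ℝ) ^ s / k ^ N with hT
  have hT0 : 0 ≤ T := by positivity
  have key : ∀ m ∈ Finset.Icc 1 N, C ^ m * (m.factorial : ℝ) ^ s / k ^ m
      ≤ 2*C*((1:ℝ)/2)^m*k + T := by
    intro m hm
    rw [Finset.mem_Icc] at hm
    obtain ⟨hm1, hm2⟩ := hm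
    have hfm : (0:ℝ) < ((m.factorial : ℕ):ℝ) := by positivity
    have hfms : (0:ℝ) < (m.factorial : ℝ) ^ s := Real.rpow_pos_of_pos hfm s
    by_cases hA : B^(m-1) * (m.factorial : ℝ)^s ≤ k^(m-1)
    · -- decaying regime
      have h1 : C ^ m * (m.factorial : ℝ) ^ s / k ^ m ≤ 2*C*((1:ℝ)/2)^m*k := by
        rw [div_le_iff₀ (by positivity)]
        have hhalf : ((1:ℝ)/2)^m = (1/2) * ((1:ℝ)/2)^(m-1) := by
          rw [← pow_succ']; congr 1; omega
        have hCm : C^m = C * C^(m-1) := by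
          rw [← pow_succ']; congr 1; omega
        have key1 : (1:ℝ) ≤ ((1:ℝ)/2 * 2^s)^(m-1) := by
          calc (1:ℝ) = 1^(m-1) := (one_pow _).symm
            _ ≤ ((1:ℝ)/2*2^s)^(m-1) := pow_le_pow_left₀ zero_le_one (by linarith) _
        have e1 : C ^ m ≤ 2*C*((1:ℝ)/2)^m * B^(m-1) := by
          calc C^m = C^m * 1 := (mul_one _).symm
            _ ≤ C^m * (((1:ℝ)/2 * 2^s)^(m-1)) :=
                mul_le_mul_of_nonneg_left key1 (by positivity)
            _ = 2*C*((1:ℝ)/2)^m * B^(m-1) := by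
                rw [hB, hhalf, hCm, mul_pow]; ring
        have e2 : k^(m-1) ≤ k * k^m := by
          calc k^(m-1) ≤ k^m := pow_le_pow_right₀ hk (by omega)
            _ = 1 * k^m := (one_mul _).symm
            _ ≤ k * k^m := by nlinarith [pow_pos hk0 m]
        calc C ^ m * (m.factorial:ℝ)^s ≤ (2*C*((1:ℝ)/2)^m * B^(m-1)) * (m.factorial:ℝ)^s :=
              mul_le_mul_of_nonneg_right e1 (le_of_lt hfms)
          _ = (2*C*((1:ℝ)/2)^m) * (B^(m-1) * (m.factorial:ℝ)^s) := by ring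
          _ ≤ (2*C*((1:ℝ)/2)^m) * k^(m-1) :=
              mul_le_mul_of_nonneg_left hA (by positivity)
          _ ≤ (2*C*((1:ℝ)/2)^m) * (k * k^m) :=
              mul_le_mul_of_nonneg_left e2 (by positivity)
          _ = 2*C*((1:ℝ)/2)^m*k * k^m := by ring
      have := mul_pos (mul_pos (mul_pos (by norm_num : (0:ℝ)<2) hC0) (by positivity : (0:ℝ) < ((1:ℝ)/2)^m)) hk0
      linarith
    · -- large regime: a_m ≤ T
      push_neg at hA
      have hm2' : 2 ≤ m := by
        by_contra h
        have : m = 1 := by omega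
        subst this
        simp [Nat.factorial, Real.one_rpow] at hA
      have hHyp : k^(m-1) ≤ B^(m-1) * (m.factorial : ℝ)^s := le_of_lt hA
      have G : k^(N-m) * (m.factorial : ℝ)^s ≤ B^(N-m) * (N.factorial : ℝ)^s := by
        apply le_of_pow_le_pow_left₀ (n := m-1) (by omega) (by positivity)
        rw [mul_pow, mul_pow]
        have step1 : (k^(N-m))^(m-1) ≤ (B^(m-1))^(N-m) * ((m.factorial:ℝ)^s)^(N-m) := by
          calc (k^(N-m))^(m-1) = (k^(m-1))^(N-m) := by rw [← pow_mul, ← pow_mul, Nat.mul_comm]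
            _ ≤ (B^(m-1) * (m.factorial:ℝ)^s)^(N-m) := pow_le_pow_left₀ (by positivity) hHyp _
            _ = (B^(m-1))^(N-m) * ((m.factorial:ℝ)^s)^(N-m) := mul_pow _ _ _
        have step2 : ((m.factorial:ℝ)^s)^(N-m) * ((m.factorial:ℝ)^s)^(m-1)
            ≤ ((N.factorial:ℝ)^s)^(m-1) := by
          rw [← pow_add]
          have hNm : (N-m) + (m-1) = N - 1 := by omega
          rw [hNm]
          rw [rpow_pow_comm _ (le_of_lt hfm) s, rpow_pow_comm _ (le_of_lt hfN) s]
          apply Real.rpow_le_rpow (by positivity) _ (by linarith)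
          have := nat_key m N hm1 hm2
          calc ((m.factorial:ℝ))^(N-1) = ((m.factorial^(N-1) : ℕ) : ℝ) := by push_cast; ring
            _ ≤ ((N.factorial^(m-1) : ℕ) : ℝ) := by exact_mod_cast this
            _ = ((N.factorial:ℝ))^(m-1) := by push_cast; ring
        calc (k^(N-m))^(m-1) * ((m.factorial:ℝ)^s)^(m-1)
            ≤ ((B^(m-1))^(N-m) * ((m.factorial:ℝ)^s)^(N-m)) * ((m.factorial:ℝ)^s)^(m-1) :=
              mul_le_mul_of_nonneg_right step1 (by positivity)
          _ = (B^(m-1))^(N-m) * (((m.factorial:ℝ)^s)^(N-m) * ((m.factorial:ℝ)^s)^(m-1)) := by ring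
          _ ≤ (B^(m-1))^(N-m) * ((N.factorial:ℝ)^s)^(m-1) :=
              mul_le_mul_of_nonneg_left step2 (by positivity)
          _ = (B^(N-m))^(m-1) * ((N.factorial:ℝ)^s)^(m-1) := by
              rw [← pow_mul, ← pow_mul, Nat.mul_comm]
      have h1 : C ^ m * (m.factorial : ℝ) ^ s / k ^ m ≤ T := by
        rw [hT, div_le_div_iff₀ (by positivity) (by positivity)]
        have hkN : k^N = k^m * k^(N-m) := by rw [← pow_add]; congr 1; omega
        have hBN : B^N = B^m * B^(N-m) := by rw [← pow_add]; congr 1; omega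
        rw [hkN, hBN]
        have hCm : C^m ≤ B^m := pow_le_pow_left₀ (le_of_lt hC0) hCB m
        calc C ^ m * (m.factorial:ℝ)^s * (k^m * k^(N-m))
            = (C^m) * (k^(N-m) * (m.factorial:ℝ)^s) * k^m := by ring
          _ ≤ (B^m) * (B^(N-m) * (N.factorial:ℝ)^s) * k^m := by
              apply mul_le_mul_of_nonneg_right _ (by positivity : (0:ℝ) ≤ k^m)
              exact mul_le_mul hCm G (by positivity) (by positivity)
          _ = B^m * B^(N-m) * (N.factorial:ℝ)^s * k^m := by ring
      have hp : (0:ℝ) ≤ 2*C*((1:ℝ)/2)^m*k := by positivity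
      linarith
  calc ∑ m ∈ Finset.Icc 1 N, C ^ m * (m.factorial : ℝ) ^ s / k ^ m
      ≤ ∑ m ∈ Finset.Icc 1 N, (2*C*((1:ℝ)/2)^m*k + T) := Finset.sum_le_sum key
    _ = 2*C*k * (∑ m ∈ Finset.Icc 1 N, ((1:ℝ)/2)^m) + (N : ℝ) * T := by
        rw [Finset.sum_add_distrib, Finset.sum_const, Nat.card_Icc]
        congr 1
        · rw [Finset.mul_sum]
          exact Finset.sum_congr rfl (fun x _ => by ring)
        · simp [nsmul_eq_mul]
    _ ≤ 2*C*k * 1 + (2:ℝ)^N * T := by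
        have g := geom_half_sum N
        have hN2 : (N:ℝ) ≤ (2:ℝ)^N := by exact_mod_cast (Nat.lt_two_pow_self (n := N)).le
        have h1 := mul_le_mul_of_nonneg_left g (by positivity : (0:ℝ) ≤ 2*C*k)
        have h2 := mul_le_mul_of_nonneg_right hN2 hT0
        linarith
    _ ≤ 2*C * (k + (2*B) ^ N * (N.factorial : ℝ) ^ s / k ^ N) := by
        have h2 : (2:ℝ)^N * T ≤ 2*C*((2:ℝ)^N * T) :=
          le_mul_of_one_le_left (by positivity) (by linarith)
        have h3 : (2*B)^N * (N.factorial:ℝ)^s / k^N = (2:ℝ)^N * T := by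
          rw [hT]; ring
        rw [h3, mul_add]
        linarith [h2]
end
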